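/- Let μ ≥ 1 be a real number and define P_1(x) = 1/μ + (√(μ−1)/μ)·x. Then ∫_{−1}^{1} P_1(y) P_1((5/3)y + μx)·(3/2)y² dy = P_1(x) for all real x. The same identity holds with P_1(x) = 1/μ − (√(μ−1)/μ)·x. -/

import Mathlib

open MeasureTheory Set

lemma key_integral (a b d e : ℝ) :
    (∫ y in Ioo (-1 : ℝ) 1, (a + b * y) * (d + e * y) * ((3 / 2) * y ^ 2))
      = a * d + (3 / 5) * (b * e) := by
  rw [← integral_Ioc_eq_integral_Ioo,
    ← intervalIntegral.integral_of_le (by norm_num : (-1:ℝ) ≤ 1)]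
  have h : ∀ y : ℝ, (a + b * y) * (d + e * y) * ((3 / 2) * y ^ 2)
      = (3/2*(a*d)) * y ^ 2 + ((3/2*(a*e+b*d)) * y ^ 3 + (3/2*(b*e)) * y ^ 4) := by
    intro y; ring
  simp only [h]
  rw [intervalIntegral.integral_add, intervalIntegral.integral_add,
    intervalIntegral.integral_const_mul, intervalIntegral.integral_const_mul,
    intervalIntegral.integral_const_mul, integral_pow, integral_pow, integral_pow]
  · norm_num; ring
  all_goals apply Continuous.intervalIntegrable; continuity

theorem example_one (μ : ℝ) (hμ : 1 ≤ μ) (P Q : ℝ → ℝ)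
    (hP : ∀ x, P x = 1 / μ + (Real.sqrt (μ - 1) / μ) * x)
    (hQ : ∀ x, Q x = 1 / μ - (Real.sqrt (μ - 1) / μ) * x) :
    (∀ x : ℝ,
      (∫ y in Ioo (-1 : ℝ) 1, P y * P ((5 / 3) * y + μ * x) * ((3 / 2) * y ^ 2)) = P x) ∧
    (∀ x : ℝ,
      (∫ y in Ioo (-1 : ℝ) 1, Q y * Q ((5 / 3) * y + μ * x) * ((3 / 2) * y ^ 2)) = Q x) := by
  have hμ0 : μ ≠ 0 := by linarith
  set c : ℝ := Real.sqrt (μ - 1) / μ with hc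
  clear_value c
  have hc2 : c ^ 2 = (μ - 1) / μ ^ 2 := by
    rw [hc, div_pow, Real.sq_sqrt (by linarith)]
  constructor
  · intro x
    have h : ∀ y : ℝ, P y * P ((5 / 3) * y + μ * x) * ((3 / 2) * y ^ 2)
        = (1/μ + c * y) * ((1/μ + c*μ*x) + (5*c/3) * y) * ((3 / 2) * y ^ 2) := by
      intro y; rw [hP, hP]; ring
    simp only [h, key_integral]
    rw [hP]
    have hcc : c ^ 2 * μ ^ 2 = μ - 1 := by rw [hc2]; field_simp
    field_simp
    linear_combination hcc
  · intro x
    have h : ∀ y : ℝ, Q y * Q ((5 / 3) * y + μ * x) * ((3 / 2) * y ^ 2)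
        = (1/μ + (-c) * y) * ((1/μ - c*μ*x) + (-(5*c/3)) * y) * ((3 / 2) * y ^ 2) := by
      intro y; rw [hQ, hQ]; ring
    simp only [h, key_integral]
    rw [hQ]
    have hcc : c ^ 2 * μ ^ 2 = μ - 1 := by rw [hc2]; field_simp
    field_simp
    linear_combination hcc
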